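/- Let α be a nonzero decomposable effective 3-form on (V, Ω), i.e. α = ξ₁∧ξ₂∧ξ₃ ≠ 0 for covectors ξᵢ ∈ V* and α∧Ω = 0. Then the kernel E_α = {X ∈ V : ι_Xα = 0} is a Lagrangian subspace of (V, Ω): it has dimension 3 and Ω(X,Y) = 0 for all X, Y ∈ E_α. -/
import Mathlib


open scoped TensorProduct

/-- The wedge product of alternating forms with values in a commutative algebra `A`
(determinant/shuffle convention, via `AlternatingMap.domCoprod`). -/
noncomputable def wedge {V : Type*} [AddCommGroup V] [Module ℝ V]
    {A : Type*} [CommRing A] [Algebra ℝ A] {k l : ℕ}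
    (α : AlternatingMap ℝ V A (Fin k)) (β : AlternatingMap ℝ V A (Fin l)) :
    AlternatingMap ℝ V A (Fin (k + l)) :=
  (LinearMap.mul' ℝ A).compAlternatingMap ((α.domCoprod β).domDomCongr finSumFinEquiv)

/-- A covector regarded as an alternating `1`-form. -/
noncomputable def oneForm {V : Type*} [AddCommGroup V] [Module ℝ V]
    {A : Type*} [CommRing A] [Algebra ℝ A] (ξ : V →ₗ[ℝ] A) :
    AlternatingMap ℝ V A (Fin 1) :=
  AlternatingMap.ofSubsingleton ℝ V A (0 : Fin 1) ξ

section Helpers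

open Equiv MultilinearMap
set_option maxRecDepth 4000

variable {V : Type*} [AddCommGroup V] [Module ℝ V]
variable {W W' : Type*} [AddCommGroup W] [Module ℝ W] [AddCommGroup W'] [Module ℝ W']

lemma H1 {ι : Type*} [Fintype ι] [DecidableEq ι] (g : W →ₗ[ℝ] W')
    (M : MultilinearMap ℝ (fun _ : ι => V) W) :
    g.compAlternatingMap (MultilinearMap.alternatization M)
      = MultilinearMap.alternatization (g.compMultilinearMap M) := by
  ext v
  simp only [LinearMap.compAlternatingMap_apply, MultilinearMap.alternatization_apply,
    MultilinearMap.domDomCongr_apply, LinearMap.compMultilinearMap_apply, Units.smul_def]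
  rw [map_sum g]
  exact Finset.sum_congr rfl fun σ _ => (map_zsmul g _ _)

lemma H2 {ι κ : Type*} [Fintype ι] [DecidableEq ι] [Fintype κ] [DecidableEq κ] (e : ι ≃ κ)
    (M : MultilinearMap ℝ (fun _ : ι => V) W) :
    (MultilinearMap.alternatization M).domDomCongr e
      = MultilinearMap.alternatization (M.domDomCongr e) := by
  ext v
  simp only [AlternatingMap.domDomCongr_apply, MultilinearMap.alternatization_apply,
    MultilinearMap.domDomCongr_apply]
  refine Fintype.sum_equiv e.permCongr _ _ fun σ => ?_
  rw [Equiv.Perm.sign_permCongr]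
  congr 1
  exact congrArg M (funext fun i => by
    simp only [Equiv.permCongr_apply, Function.comp_apply, Equiv.symm_apply_apply])

/-- wedge of alternatizations is an alternatization. -/
lemma wedge_alternatization {k l : ℕ}
    (m₁ : MultilinearMap ℝ (fun _ : Fin k => V) ℝ) (m₂ : MultilinearMap ℝ (fun _ : Fin l => V) ℝ) :
    wedge (MultilinearMap.alternatization m₁) (MultilinearMap.alternatization m₂)
      = MultilinearMap.alternatization
          (((LinearMap.mul' ℝ ℝ).compMultilinearMap (m₁.domCoprod m₂)).domDomCongr
            finSumFinEquiv) := by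
  unfold wedge
  rw [← MultilinearMap.domCoprod_alternization, H2, H1]
  congr 1

lemma oneForm_alternatization (ξ : V →ₗ[ℝ] ℝ) :
    MultilinearMap.alternatization ((oneForm ξ : AlternatingMap ℝ V ℝ (Fin 1)) :
      MultilinearMap ℝ (fun _ : Fin 1 => V) ℝ) = oneForm ξ := by
  rw [AlternatingMap.coe_alternatization]
  simp

noncomputable def prodTwo (ξ₂ ξ₃ : V →ₗ[ℝ] ℝ) : MultilinearMap ℝ (fun _ : Fin 2 => V) ℝ :=
  ((LinearMap.mul' ℝ ℝ).compMultilinearMap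
    (MultilinearMap.domCoprod ↑(oneForm ξ₂) ↑(oneForm ξ₃))).domDomCongr
      (finSumFinEquiv : Fin 1 ⊕ Fin 1 ≃ Fin 2)

noncomputable def tripleMap (ξ₁ ξ₂ ξ₃ : V →ₗ[ℝ] ℝ) : MultilinearMap ℝ (fun _ : Fin 3 => V) ℝ :=
  ((LinearMap.mul' ℝ ℝ).compMultilinearMap
    (MultilinearMap.domCoprod (↑(oneForm ξ₁)) (prodTwo ξ₂ ξ₃))).domDomCongr
      (finSumFinEquiv : Fin 1 ⊕ Fin 2 ≃ Fin 3)

lemma wedge_two_eq (ξ₂ ξ₃ : V →ₗ[ℝ] ℝ) :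
    wedge (oneForm ξ₂) (oneForm ξ₃) = MultilinearMap.alternatization (prodTwo ξ₂ ξ₃) := by
  conv_lhs => rw [← oneForm_alternatization ξ₂, ← oneForm_alternatization ξ₃]
  exact wedge_alternatization _ _

lemma triple_eq (ξ₁ ξ₂ ξ₃ : V →ₗ[ℝ] ℝ) :
    wedge (oneForm ξ₁) (wedge (oneForm ξ₂) (oneForm ξ₃))
      = MultilinearMap.alternatization (tripleMap ξ₁ ξ₂ ξ₃) := by
  conv_lhs => rw [← oneForm_alternatization ξ₁, wedge_two_eq]
  have h2 : prodTwo ξ₂ ξ₃ = prodTwo ξ₂ ξ₃ := rfl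
  exact wedge_alternatization _ _

lemma tripleMap_apply (ξ₁ ξ₂ ξ₃ : V →ₗ[ℝ] ℝ) (w : Fin 3 → V) :
    tripleMap ξ₁ ξ₂ ξ₃ w = ξ₁ (w 0) * (ξ₂ (w 1) * ξ₃ (w 2)) := by
  simp [tripleMap, prodTwo, oneForm, MultilinearMap.domCoprod_apply]
  exact congrArg₂ (· * ·) (congrArg ξ₁ (congrArg w (by decide)))
    (congrArg₂ (· * ·) (congrArg ξ₂ (congrArg w (by decide)))
      (congrArg ξ₃ (congrArg w (by decide))))

lemma triple_apply (ξ₁ ξ₂ ξ₃ : V →ₗ[ℝ] ℝ) (v : Fin 3 → V) :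
    wedge (oneForm ξ₁) (wedge (oneForm ξ₂) (oneForm ξ₃)) v
      = Matrix.det (Matrix.of fun j i : Fin 3 => (![ξ₁, ξ₂, ξ₃] i) (v j)) := by
  rw [triple_eq, MultilinearMap.alternatization_apply, Matrix.det_apply]
  refine Finset.sum_congr rfl fun σ _ => ?_
  rw [MultilinearMap.domDomCongr_apply, tripleMap_apply, Fin.prod_univ_three]
  simp only [Matrix.of_apply, Matrix.cons_val_zero, Matrix.cons_val_one, Matrix.head_cons,
    Matrix.cons_val_two, Matrix.tail_cons]
  congr 1
  ring

lemma wedge32_apply (α : AlternatingMap ℝ V ℝ (Fin 3)) (Ω : AlternatingMap ℝ V ℝ (Fin 2))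
    (w : Fin 3 ⊕ Fin 2 → V) :
    (12 : ℝ) * wedge α Ω (fun j => w (finSumFinEquiv.symm j))
      = ∑ σ : Equiv.Perm (Fin 3 ⊕ Fin 2),
          ((Equiv.Perm.sign σ : ℤ) : ℝ) *
            (α (fun i => w (σ (Sum.inl i))) * Ω (fun i => w (σ (Sum.inr i)))) := by
  have key := MultilinearMap.domCoprod_alternization_eq α Ω
  have h1 : wedge α Ω (fun j => w (finSumFinEquiv.symm j))
      = LinearMap.mul' ℝ ℝ ((α.domCoprod Ω) w) := by
    simp only [wedge, LinearMap.compAlternatingMap_apply, AlternatingMap.domDomCongr_apply]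
    congr 1
    exact congrArg _ (funext fun s => by simp)
  rw [h1]
  have hc : ((Fintype.card (Fin 3)).factorial * (Fintype.card (Fin 2)).factorial) = 12 := by
    decide
  rw [hc] at key
  have h2 : (12:ℝ) * LinearMap.mul' ℝ ℝ ((α.domCoprod Ω) w)
      = LinearMap.mul' ℝ ℝ
          ((MultilinearMap.alternatization (MultilinearMap.domCoprod (↑α) (↑Ω))) w) := by
    rw [key]
    have : ((12 • α.domCoprod Ω) w) = (12:ℕ) • ((α.domCoprod Ω) w) := rfl
    rw [this, map_nsmul, nsmul_eq_mul]
    norm_num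
  rw [h2, MultilinearMap.alternatization_apply, map_sum (LinearMap.mul' ℝ ℝ)]
  refine Finset.sum_congr rfl fun σ _ => ?_
  rw [Units.smul_def, map_zsmul, zsmul_eq_mul]
  rw [MultilinearMap.domDomCongr_apply, MultilinearMap.domCoprod_apply, LinearMap.mul'_apply]
  rfl

end Helpers

/-- The kernel `E_α = {X : ι_X α = 0}` of a nonzero decomposable effective 3-form `α`
on a symplectic `(V, Ω)` of dimension 6 is a Lagrangian subspace: it is
3-dimensional and isotropic. -/
theorem kernel_of_decomposable_effective_is_lagrangian
    {V : Type*} [AddCommGroup V] [Module ℝ V] [FiniteDimensional ℝ V]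
    (hdim : Module.finrank ℝ V = 6)
    (Ω : AlternatingMap ℝ V ℝ (Fin 2))
    (hnd : ∀ X : V, (∀ Y : V, Ω ![X, Y] = 0) → X = 0)
    (α : AlternatingMap ℝ V ℝ (Fin 3))
    (hdec : ∃ ξ₁ ξ₂ ξ₃ : Module.Dual ℝ V,
      α = wedge (oneForm ξ₁) (wedge (oneForm ξ₂) (oneForm ξ₃)))
    (hα : α ≠ 0)
    (heff : wedge α Ω = 0) :
    Module.finrank ℝ (LinearMap.ker α.curryLeft) = 3 ∧
    ∀ X ∈ LinearMap.ker α.curryLeft, ∀ Y ∈ LinearMap.ker α.curryLeft,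
      Ω ![X, Y] = 0 := by
  obtain ⟨ξ₁, ξ₂, ξ₃, hαe⟩ := hdec
  set Ξ : Fin 3 → Module.Dual ℝ V := ![ξ₁, ξ₂, ξ₃] with hΞ
  have hev : ∀ v : Fin 3 → V, α v = Matrix.det (Matrix.of fun j i : Fin 3 => (Ξ i) (v j)) := by
    intro v; rw [hαe]; exact triple_apply ξ₁ ξ₂ ξ₃ v
  have hli : LinearIndependent ℝ Ξ := by
    by_contra hdep
    rw [Fintype.not_linearIndependent_iff] at hdep
    obtain ⟨g, hg, i₀, hi₀⟩ := hdep
    apply hα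
    ext v
    rw [hev]
    have hmv : Matrix.mulVec (Matrix.of fun j i : Fin 3 => (Ξ i) (v j)) g = 0 := by
      funext j
      have := congrArg (fun φ => φ (v j)) hg
      simpa [Matrix.mulVec, dotProduct, mul_comm] using this
    have hdet := (Matrix.exists_mulVec_eq_zero_iff).mp
      ⟨g, fun hgz => hi₀ (by simp [hgz]), hmv⟩
    simp [hdet]
  have hmemK : ∀ x : V,
      x ∈ (Submodule.span ℝ (Set.range Ξ)).dualCoannihilator ↔ ∀ i, Ξ i x = 0 := by
    intro x
    rw [Submodule.mem_dualCoannihilator]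
    constructor
    · intro h i; exact h (Ξ i) (Submodule.subset_span ⟨i, rfl⟩)
    · intro h φ hφ
      have hle : Submodule.span ℝ (Set.range Ξ)
          ≤ LinearMap.ker ((Module.Dual.eval ℝ V) x) := by
        rw [Submodule.span_le]
        rintro _ ⟨i, rfl⟩
        simpa using h i
      simpa using hle hφ
  have hfrK : Module.finrank ℝ (Submodule.span ℝ (Set.range Ξ)).dualCoannihilator = 3 := by
    have h1 := Subspace.finrank_add_finrank_dualCoannihilator_eq (Submodule.span ℝ (Set.range Ξ))
    rw [finrank_span_eq_card hli, hdim, Fintype.card_fin] at h1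
    omega
  set L : V →ₗ[ℝ] (Fin 3 → ℝ) := LinearMap.pi (fun i => Ξ i) with hL
  have hkerL : LinearMap.ker L = (Submodule.span ℝ (Set.range Ξ)).dualCoannihilator := by
    ext x
    rw [LinearMap.mem_ker, hmemK, funext_iff]
    simp [hL, LinearMap.pi_apply]
  have hsurj : Function.Surjective L := by
    rw [← LinearMap.range_eq_top]
    apply Submodule.eq_top_of_finrank_eq
    have h2 := LinearMap.finrank_range_add_finrank_ker L
    rw [hkerL, hfrK, hdim] at h2
    simp only [Module.finrank_pi, Fintype.card_fin]
    omega
  choose uu huu using fun j => hsurj (Pi.single j 1)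
  have hu : ∀ i j, Ξ i (uu j) = if i = j then 1 else 0 := by
    intro i j
    have := congrFun (huu j) i
    simpa [hL, LinearMap.pi_apply, Pi.single_apply, eq_comm] using this
  have hαu : α uu = 1 := by
    rw [hev]
    have hid : (Matrix.of fun j i : Fin 3 => Ξ i (uu j)) = 1 := by
      ext j i
      simp [hu, Matrix.one_apply, eq_comm]
    rw [hid, Matrix.det_one]
  have hvanish : ∀ (v : Fin 3 → V) (t : Fin 3), (∀ i, Ξ i (v t) = 0) → α v = 0 := by
    intro v t ht
    rw [hev]
    exact Matrix.det_eq_zero_of_row_eq_zero t (fun i => ht i)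
  have hker : ∀ X : V, X ∈ LinearMap.ker α.curryLeft ↔ ∀ i, Ξ i X = 0 := by
    intro X
    rw [LinearMap.mem_ker]
    constructor
    · intro h
      have hval : ∀ v : Fin 2 → V, α (Matrix.vecCons X v) = 0 := fun v => by
        rw [← AlternatingMap.curryLeft_apply_apply, h]; rfl
      intro i
      fin_cases i
      · have h0 := hval ![uu 1, uu 2]
        rw [hev] at h0
        simpa [Matrix.det_fin_three, hu] using h0
      · have h0 := hval ![uu 0, uu 2]
        rw [hev] at h0
        have := h0
        simp [Matrix.det_fin_three, hu] at this
        simpa using this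
      · have h0 := hval ![uu 0, uu 1]
        rw [hev] at h0
        simpa [Matrix.det_fin_three, hu] using h0
    · intro h
      ext v
      have := hvanish (Matrix.vecCons X v) 0 (by simpa using h)
      simpa [AlternatingMap.curryLeft_apply_apply] using this
  constructor
  · have hks : LinearMap.ker α.curryLeft = (Submodule.span ℝ (Set.range Ξ)).dualCoannihilator := by
      ext X; rw [hker, hmemK]
    rw [hks]; exact hfrK
  · intro X hX Y hY
    have hXK : ∀ i, Ξ i X = 0 := (hker X).mp hX
    have hYK : ∀ i, Ξ i Y = 0 := (hker Y).mp hY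
    set w : Fin 3 ⊕ Fin 2 → V := Sum.elim uu ![X, Y] with hw
    have h0 : (12:ℝ) * wedge α Ω (fun j => w (finSumFinEquiv.symm j)) = 0 := by
      rw [heff]; simp
    rw [wedge32_apply] at h0
    have hterm : ∀ σ : Equiv.Perm (Fin 3 ⊕ Fin 2),
        ((Equiv.Perm.sign σ : ℤ) : ℝ) *
            (α (fun i => w (σ (Sum.inl i))) * Ω (fun i => w (σ (Sum.inr i))))
          = if (∀ i : Fin 3, (σ (Sum.inl i)).isLeft = true) then Ω ![X, Y] else 0 := by
      intro σ
      by_cases hg : ∀ i : Fin 3, (σ (Sum.inl i)).isLeft = true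
      · rw [if_pos hg]
        choose y hy using fun i => Sum.isLeft_iff.mp (hg i)
        have hyinj : Function.Injective y := fun a b hab => by
          have h' : σ (Sum.inl a) = σ (Sum.inl b) := by rw [hy a, hy b, hab]
          exact Sum.inl_injective (σ.injective h')
        have hybij := Finite.injective_iff_bijective.mp hyinj
        have hexr : ∀ j : Fin 2, ∃ j', σ (Sum.inr j) = Sum.inr j' := by
          intro j
          rcases hsum : σ (Sum.inr j) with t | t
          · obtain ⟨i, hi⟩ := hybij.2 t
            exfalso
            have h' : σ (Sum.inl i) = σ (Sum.inr j) := by rw [hy i, hi, hsum]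
            exact Sum.inl_ne_inr (σ.injective h')
          · exact ⟨t, rfl⟩
        choose z hz using hexr
        have hzinj : Function.Injective z := fun a b hab => by
          have h' : σ (Sum.inr a) = σ (Sum.inr b) := by rw [hz a, hz b, hab]
          exact Sum.inr_injective (σ.injective h')
        have hzbij := Finite.injective_iff_bijective.mp hzinj
        have hσ : σ = Equiv.sumCongr (Equiv.ofBijective y hybij) (Equiv.ofBijective z hzbij) := by
          ext s
          rcases s with i | j
          · simpa [Equiv.sumCongr_apply, Equiv.ofBijective] using hy i
          · simpa [Equiv.sumCongr_apply, Equiv.ofBijective] using hz j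
        have hargl : (fun i => w (σ (Sum.inl i))) = uu ∘ (Equiv.ofBijective y hybij) := by
          funext i; rw [hy i]; rfl
        have hargr : (fun j => w (σ (Sum.inr j))) = ![X, Y] ∘ (Equiv.ofBijective z hzbij) := by
          funext j; rw [hz j]; rfl
        rw [hargl, hargr, AlternatingMap.map_perm, AlternatingMap.map_perm, hαu, hσ,
          Equiv.Perm.sign_sumCongr]
        rcases Int.units_eq_one_or (Equiv.Perm.sign (Equiv.ofBijective y hybij)) with h | h <;>
          rcases Int.units_eq_one_or (Equiv.Perm.sign (Equiv.ofBijective z hzbij)) with h' | h' <;>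
            simp [h, h', Units.smul_def]
      · rw [if_neg hg]
        push_neg at hg
        obtain ⟨i, hi⟩ := hg
        have hex : ∃ j, σ (Sum.inl i) = Sum.inr j := by
          rcases hsum : σ (Sum.inl i) with t | t
          · exact absurd (by simp [hsum]) hi
          · exact ⟨t, rfl⟩
        obtain ⟨j, hj⟩ := hex
        have hz : α (fun i' => w (σ (Sum.inl i'))) = 0 := by
          apply hvanish _ i
          intro t
          rw [hj]
          fin_cases j
          · simpa [hw] using hXK t
          · simpa [hw] using hYK t
        rw [hz]
        ring
    rw [Finset.sum_congr rfl (fun σ _ => hterm σ)] at h0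
    rw [Finset.sum_ite, Finset.sum_const, Finset.sum_const_zero, add_zero] at h0
    have hcard : 0 < (Finset.univ.filter
        (fun σ : Equiv.Perm (Fin 3 ⊕ Fin 2) => ∀ i : Fin 3, (σ (Sum.inl i)).isLeft = true)).card :=
      Finset.card_pos.mpr ⟨1, by simp⟩
    rw [nsmul_eq_mul] at h0
    have := mul_eq_zero.mp h0
    rcases this with h | h
    · exact absurd h (by positivity)
    · exact h
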